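/- Let R be a commutative ring, r ∈ R, and C an r-contraadjusted R-module, i.e., Ext^1_R(R[r^{-1}], C) = 0. Then the natural map C → lim_n C/r^n C to the r-adic completion is surjective. -/

import Mathlib

open CategoryTheory


noncomputable section Tele
variable (R : Type) [CommRing R] (r : R)

abbrev Mfree := ℕ →₀ R

/-- e_n ↦ e_n - r e_{n+1} -/
def tf : Mfree R →ₗ[R] Mfree R :=
  LinearMap.id - r • Finsupp.lmapDomain R R (· + 1)

lemma tf_single (n : ℕ) (a : R) :
    tf R r (Finsupp.single n a) =
      Finsupp.single n a - r • Finsupp.single (n + 1) a := by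
  simp [tf, Finsupp.mapDomain_single]

/-- e_n ↦ 1/r^n -/
def tp : Mfree R →ₗ[R] Localization.Away r :=
  Finsupp.lsum R fun n => LinearMap.toSpanSingleton R _
    (IsLocalization.Away.invSelf (S := Localization.Away r) r ^ n)

lemma tp_single (n : ℕ) (a : R) :
    tp R r (Finsupp.single n a) =
      a • IsLocalization.Away.invSelf (S := Localization.Away r) r ^ n := by
  simp [tp]

lemma tp_comp_tf : (tp R r).comp (tf R r) = 0 := by
  ext n
  simp only [LinearMap.comp_apply, Finsupp.lsingle_apply, tf_single, map_sub, map_smul,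
    tp_single, LinearMap.zero_apply, one_smul, smul_eq_mul]
  rw [pow_succ, Algebra.smul_def, mul_comm (IsLocalization.Away.invSelf r ^ n), ← mul_assoc,
    IsLocalization.Away.mul_invSelf, one_mul, sub_self]

lemma tf_injective : Function.Injective (tf R r) := by
  rw [injective_iff_map_eq_zero]
  intro g hg
  have key0 : (tf R r g) 0 = g 0 := by
    simp only [tf, LinearMap.sub_apply, LinearMap.id_apply, LinearMap.smul_apply,
      Finsupp.lmapDomain_apply, Finsupp.sub_apply, Finsupp.smul_apply, smul_eq_mul]
    rw [Finsupp.mapDomain_notin_range _ _ (by simp)]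
    ring
  have keyS : ∀ m, (tf R r g) (m + 1) = g (m + 1) - r * g m := by
    intro m
    simp only [tf, LinearMap.sub_apply, LinearMap.id_apply, LinearMap.smul_apply,
      Finsupp.lmapDomain_apply, Finsupp.sub_apply, Finsupp.smul_apply, smul_eq_mul]
    rw [Finsupp.mapDomain_apply (add_left_injective 1) g m]
  have hz : ∀ m, g m = 0 := by
    intro m
    induction m with
    | zero =>
      rw [hg] at key0
      simpa using key0.symm
    | succ m ih =>
      have := keyS m
      rw [hg] at this
      simp only [Finsupp.coe_zero, Pi.zero_apply] at this
      rw [ih, mul_zero, sub_zero] at this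
      exact this.symm
  ext m
  simpa using hz m

lemma invSelf_pow_eq (n : ℕ) :
    (IsLocalization.Away.invSelf (S := Localization.Away r) r) ^ n
      = Localization.mk 1 (⟨r ^ n, ⟨n, rfl⟩⟩ : Submonoid.powers r) := by
  induction n with
  | zero =>
    rw [pow_zero]
    have : (⟨r ^ 0, ⟨0, rfl⟩⟩ : Submonoid.powers r) = 1 := Subtype.ext (pow_zero r)
    rw [this, Localization.mk_one]
  | succ n ih =>
    rw [pow_succ, ih, IsLocalization.Away.invSelf, ← Localization.mk_eq_mk',
      Localization.mk_mul]
    congr 1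
    · rw [one_mul]
    · exact Subtype.ext (by simp [pow_succ])

lemma tp_surjective : Function.Surjective (tp R r) := by
  intro z
  induction z using Localization.induction_on with
  | H y =>
    obtain ⟨a, s⟩ := y
    obtain ⟨n, hn⟩ := s.2
    refine ⟨Finsupp.single n a, ?_⟩
    rw [tp_single, invSelf_pow_eq, Localization.smul_mk, smul_eq_mul, mul_one]
    congr 1
    exact Subtype.ext hn

lemma single_sub_mem (n k : ℕ) (a : R) :
    Finsupp.single n a - Finsupp.single (n + k) (a * r ^ k)
      ∈ LinearMap.range (tf R r) := by
  induction k with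
  | zero => simp
  | succ k ih =>
    have h2 : Finsupp.single (n + k) (a * r ^ k) - Finsupp.single (n + (k + 1)) (a * r ^ (k + 1))
        ∈ LinearMap.range (tf R r) := by
      refine ⟨Finsupp.single (n + k) (a * r ^ k), ?_⟩
      rw [tf_single, Finsupp.smul_single, smul_eq_mul, ← add_assoc]
      ring_nf
    have := Submodule.add_mem _ ih h2
    simpa using this

lemma reduce_to_single (g : Mfree R) :
    ∃ N a, g - Finsupp.single N a ∈ LinearMap.range (tf R r) := by
  set N := g.support.sup id with hNdef
  refine ⟨N, ∑ n ∈ g.support, g n * r ^ (N - n), ?_⟩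
  have h1 : Finsupp.single N (∑ n ∈ g.support, g n * r ^ (N - n))
      = ∑ n ∈ g.support, Finsupp.single N (g n * r ^ (N - n)) :=
    map_sum (Finsupp.lsingle N : R →ₗ[R] Mfree R) _ _
  have h2 : g = ∑ n ∈ g.support, Finsupp.single n (g n) := by
    exact (Finsupp.sum_single g).symm
  have h3 : g - Finsupp.single N (∑ n ∈ g.support, g n * r ^ (N - n))
      = ∑ n ∈ g.support, (Finsupp.single n (g n) - Finsupp.single N (g n * r ^ (N - n))) := by
    rw [Finset.sum_sub_distrib, ← h1, ← h2]
  rw [h3]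
  refine Submodule.sum_mem _ fun n hn => ?_
  have hle : n ≤ N := Finset.le_sup (f := id) hn
  have := single_sub_mem R r n (N - n) (g n)
  rwa [Nat.add_sub_cancel' hle] at this

lemma tele_exact (g : Mfree R) (hg : tp R r g = 0) :
    g ∈ LinearMap.range (tf R r) := by
  obtain ⟨N, a, hN⟩ := reduce_to_single R r g
  -- tp of the single is zero
  obtain ⟨h, hh⟩ := hN
  have htps : tp R r (Finsupp.single N a) = 0 := by
    have : tp R r (g - Finsupp.single N a) = 0 := by
      rw [← hh, ← LinearMap.comp_apply, tp_comp_tf, LinearMap.zero_apply]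
    rw [map_sub, hg, zero_sub, neg_eq_zero] at this
    exact this
  rw [tp_single, invSelf_pow_eq, Localization.smul_mk, smul_eq_mul, mul_one,
    Localization.mk_eq_mk'] at htps
  rw [IsLocalization.mk'_eq_zero_iff] at htps
  obtain ⟨⟨m, k, hk⟩, hm⟩ := htps
  simp only at hm
  subst hk
  have h1 := single_sub_mem R r N k a
  rw [show a * r ^ k = 0 by rw [mul_comm]; exact hm, Finsupp.single_zero, sub_zero] at h1
  have h2 : g - Finsupp.single N a ∈ LinearMap.range (tf R r) := ⟨h, hh⟩
  have := Submodule.add_mem _ h2 h1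
  simpa using this

end Tele

noncomputable section Cat
open CategoryTheory
variable (R : Type) [CommRing R] (r : R)

def teleX : ℕ → ModuleCat R
  | 0 => ModuleCat.of R (Mfree R)
  | 1 => ModuleCat.of R (Mfree R)
  | _ + 2 => ModuleCat.of R PUnit

def teled : ∀ n : ℕ, teleX R (n + 1) ⟶ teleX R n
  | 0 => ModuleCat.ofHom (tf R r)
  | _ + 1 => 0

def teleComplex : ChainComplex (ModuleCat R) ℕ :=
  ChainComplex.of (teleX R) (teled R r) (fun n => by
    show teled R r (n + 1) ≫ teled R r n = 0
    rw [show teled R r (n + 1) = 0 from rfl, Limits.zero_comp])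

lemma teleComplex_d_1_0 : (teleComplex R r).d 1 0 = ModuleCat.ofHom (tf R r) := by
  unfold teleComplex
  exact ChainComplex.of_d (teleX R) (teled R r) 0

lemma teleComplex_d_succ (n : ℕ) : (teleComplex R r).d (n + 2) (n + 1) = 0 := by
  unfold teleComplex
  exact ChainComplex.of_d _ _ (n + 1)

lemma teleComplex_exactAt_succ (n : ℕ) : (teleComplex R r).ExactAt (n + 1) := by
  rw [HomologicalComplex.exactAt_iff' _ (n + 1 + 1) (n + 1) n (by simp) (by simp)]
  match n with
  | 0 =>
    refine ShortComplex.exact_iff_mono _ ?_ |>.2 ?_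
    · exact teleComplex_d_succ R r 0
    · show Mono ((teleComplex R r).d 1 0)
      rw [teleComplex_d_1_0]
      exact (ModuleCat.mono_iff_injective (f := ModuleCat.ofHom (tf R r))).2 (tf_injective R r)
  | n + 1 =>
    apply ShortComplex.exact_of_isZero_X₂
    show Limits.IsZero ((teleComplex R r).X (n + 2))
    exact ModuleCat.isZero_of_subsingleton (ModuleCat.of R PUnit)

def teleResolution : ProjectiveResolution (ModuleCat.of R (Localization.Away r)) where
  complex := teleComplex R r
  projective n := by
    match n with
    | 0 => exact ModuleCat.projective_of_free Finsupp.basisSingleOne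
    | 1 => exact ModuleCat.projective_of_free Finsupp.basisSingleOne
    | n + 2 => exact (ModuleCat.isZero_of_subsingleton (ModuleCat.of R PUnit)).projective
  π := (ChainComplex.toSingle₀Equiv _ _).symm ⟨ModuleCat.ofHom (tp R r), by
    rw [teleComplex_d_1_0]
    show ModuleCat.ofHom (tf R r) ≫ ModuleCat.ofHom (tp R r) =
      (0 : ModuleCat.of R (Mfree R) ⟶ ModuleCat.of R (Localization.Away r))
    rw [← ModuleCat.ofHom_comp, tp_comp_tf R r]
    rfl⟩
  quasiIso := ⟨fun n => by
    cases n with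
    | zero =>
      rw [ChainComplex.quasiIsoAt₀_iff, ShortComplex.quasiIso_iff_of_zeros']
      · have hex : (ShortComplex.mk (ModuleCat.ofHom (tf R r)) (ModuleCat.ofHom (tp R r))
            (by rw [← ModuleCat.ofHom_comp, tp_comp_tf R r]; rfl)).Exact := by
          rw [ShortComplex.moduleCat_exact_iff]
          intro x hx
          exact tele_exact R r x hx
        have hepi : Epi (ShortComplex.mk (ModuleCat.ofHom (tf R r)) (ModuleCat.ofHom (tp R r))
            (by rw [← ModuleCat.ofHom_comp, tp_comp_tf R r]; rfl)).g := by
          rw [ModuleCat.epi_iff_surjective]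
          exact tp_surjective R r
        refine (ShortComplex.exact_and_epi_g_iff_of_iso ?_).2 ⟨hex, hepi⟩
        refine ShortComplex.isoMk (Iso.refl _) (Iso.refl _) (Iso.refl _) ?_ ?_
        · simp [teleComplex_d_1_0]; rfl
        · simp [ChainComplex.toSingle₀Equiv_symm_apply_f_zero]; rfl
      all_goals rfl
    | succ n =>
      rw [quasiIsoAt_iff_exactAt']
      · exact teleComplex_exactAt_succ R r n
      · apply ChainComplex.exactAt_succ_single_obj⟩

end Cat

noncomputable section Extract
open CategoryTheory
variable (R : Type) [CommRing R] (r : R) (C : Type) [AddCommGroup C] [Module R C]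

lemma ext_vanish_surj
    (hca : Subsingleton (((Ext R (ModuleCat R) 1).obj
      (Opposite.op (ModuleCat.of R (Localization.Away r)))).obj (ModuleCat.of R C))) :
    ∀ g : Mfree R →ₗ[R] C, ∃ h : Mfree R →ₗ[R] C, h.comp (tf R r) = g := by
  intro g
  set P := teleResolution R r with hP
  set K := P.complex.linearYonedaObj R (ModuleCat.of R C) with hK
  have e := P.isoExt (R := R) 1 (ModuleCat.of R C)
  haveI hs : Subsingleton (K.homology 1) :=
    (((forget (ModuleCat R)).mapIso e).toEquiv.symm).subsingleton
  have hz : Limits.IsZero (K.homology 1) := ModuleCat.isZero_of_subsingleton _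
  have hex : K.ExactAt 1 := (HomologicalComplex.exactAt_iff_isZero_homology _ _).2 hz
  rw [HomologicalComplex.exactAt_iff' K 0 1 2 (by simp) (by simp)] at hex
  rw [ShortComplex.moduleCat_exact_iff] at hex
  haveI hps : Subsingleton ((teleComplex R r).X 2) :=
    inferInstanceAs (Subsingleton PUnit)
  haveI hsub : Subsingleton ((teleComplex R r).X 2 ⟶ ModuleCat.of R C) := by
    constructor
    intro a b
    ext x
    rw [Subsingleton.elim x 0, map_zero, map_zero]
  haveI hsub' : Subsingleton ((HomologicalComplex.sc' K 0 1 2).X₃) := hsub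
  obtain ⟨y, hy⟩ := hex (ModuleCat.ofHom g) (Subsingleton.elim _ _)
  refine ⟨y.hom, ?_⟩
  have h2 : (HomologicalComplex.sc' K 0 1 2).f y = ((teleComplex R r).d 1 0 ≫ y : _) := rfl
  rw [h2, teleComplex_d_1_0] at hy
  exact congrArg ModuleCat.Hom.hom hy

end Extract

section Solve
open CategoryTheory Pointwise
variable (R : Type) [CommRing R] (r : R) (C : Type) [AddCommGroup C] [Module R C]

lemma solve_rec
    (hca : Subsingleton (((Ext R (ModuleCat R) 1).obj
      (Opposite.op (ModuleCat.of R (Localization.Away r)))).obj (ModuleCat.of R C)))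
    (b : ℕ → C) : ∃ x : ℕ → C, ∀ n, x n - r • x (n + 1) = b n := by
  obtain ⟨h, hh⟩ := ext_vanish_surj R r C hca
    (Finsupp.lsum R fun n => LinearMap.toSpanSingleton R C (b n))
  refine ⟨fun n => h (Finsupp.single n 1), fun n => ?_⟩
  have key := LinearMap.congr_fun hh (Finsupp.single n 1)
  rw [LinearMap.comp_apply, tf_single, map_sub, map_smul] at key
  rw [key]
  simp [LinearMap.toSpanSingleton_apply]

theorem mem_iff (s : R) (m : C) :
    m ∈ (Ideal.span {s} • ⊤ : Submodule R C) ↔ ∃ y, m = s • y := by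
  rw [Submodule.ideal_span_singleton_smul]
  constructor
  · intro hm
    have hm' : m ∈ s • ((⊤ : Submodule R C) : Set C) := by
      rw [← Submodule.coe_pointwise_smul]
      exact hm
    obtain ⟨y, -, hy⟩ := hm'
    exact ⟨y, hy.symm⟩
  · rintro ⟨y, rfl⟩
    exact Submodule.smul_mem_pointwise_smul y s ⊤ trivial

end Solve


/-- Let `R` be a commutative ring, `r ∈ R`, and `C` an `r`-contraadjusted
`R`-module, i.e. `Ext¹_R(R[r⁻¹], C) = 0`.  Then the natural map `C → lim_n C/rⁿC` to the
`r`-adic completion is surjective: every compatible sequence of cosets is the image of an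
element of `C`. -/
theorem contraadjusted_is_complete
    (R : Type) [CommRing R] (r : R)
    (C : Type) [AddCommGroup C] [Module R C]
    (hca : Subsingleton (((Ext R (ModuleCat R) 1).obj
      (Opposite.op (ModuleCat.of R (Localization.Away r)))).obj (ModuleCat.of R C))) :
    ∀ c : ℕ → C,
      (∀ n : ℕ, c (n + 1) - c n ∈ (Ideal.span {r ^ n} • ⊤ : Submodule R C)) →
      ∃ x : C, ∀ n : ℕ, x - c n ∈ (Ideal.span {r ^ n} • ⊤ : Submodule R C) := by
  intro c hc
  have hmem : ∀ n, ∃ y, c (n + 1) - c n = r ^ n • y :=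
    fun n => (mem_iff R C (r ^ n) _).1 (hc n)
  choose b hb using hmem
  obtain ⟨x, hx⟩ := solve_rec R r C hca b
  refine ⟨c 0 + x 0, fun n => ?_⟩
  rw [mem_iff R C]
  refine ⟨x n, ?_⟩
  induction n with
  | zero => simp
  | succ n ih =>
    have h1 : c 0 + x 0 - c (n + 1) = (c 0 + x 0 - c n) - (c (n + 1) - c n) := by ring_nf; abel
    rw [h1, ih, hb n, ← smul_sub, show x n - b n = r • x (n + 1) by
      rw [← hx n]; abel, smul_smul, ← pow_succ]
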